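/- Existence for the multiparticle Skorohod system: fix T > 0, an integer n ≥ 1, continuous functions f₁, …, f_n : [0,T] → ℝ, v ∈ ℝ and K ≥ 0. Then there exists a solution (I, V) of the Skorohod system for (f, v, K); moreover, setting m_i(t) := sup_{0 ≤ s ≤ t} max(−(f_i(s) + I(s)), 0) and x_i := f_i + I + m_i, one has x_i(t) ≥ 0 for all t ∈ [0,T], and the Lebesgue–Stieltjes measure induced by m_i assigns zero mass to {s ∈ [0,T] : x_i(s) > 0}, for each i = 1, …, n. -/

import Mathlib

open Set MeasureTheory
open scoped Nat

/-- The Skorohod reflection term: `m_f(t) = sup_{0 ≤ s ≤ t} max(-f(s), 0)`. -/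
noncomputable def mf (f : ℝ → ℝ) (t : ℝ) : ℝ :=
  sSup ((fun s => max (-f s) 0) '' Set.Icc 0 t)

/-- `(I, V)` is a solution of the multiparticle Skorohod system for data `(f, v, K)`:
with `m_i(t) = sup_{0 ≤ s ≤ t} max(-(f_i(s) + I(s)), 0)`, one has
`V(t) = -v + (K/n) ∑ᵢ m_i(t)` and `I(t) = ∫₀ᵗ V(s) ds` on `[0,T]`. -/
def IsSkorohodSystemSol (T : ℝ) (n : ℕ) (f : Fin n → ℝ → ℝ) (v K : ℝ)
    (I V : ℝ → ℝ) : Prop :=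
  ContinuousOn I (Set.Icc 0 T) ∧ ContinuousOn V (Set.Icc 0 T) ∧
  (∀ t ∈ Set.Icc 0 T,
    V t = -v + (K / (n : ℝ)) * ∑ i, mf (fun s => f i s + I s) t) ∧
  (∀ t ∈ Set.Icc 0 T, I t = ∫ s in (0:ℝ)..t, V s)


namespace SkoAux

lemma hcont {g : ℝ → ℝ} (hg : Continuous g) :
    Continuous (fun s => max (-g s) 0) := by fun_prop

lemma bdd {g : ℝ → ℝ} (hg : Continuous g) (t : ℝ) :
    BddAbove ((fun s => max (-g s) 0) '' Icc 0 t) :=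
  (isCompact_Icc.image_of_continuousOn (hcont hg).continuousOn).bddAbove

lemma le_mf {g : ℝ → ℝ} (hg : Continuous g) {s t : ℝ} (hs : s ∈ Icc 0 t) :
    max (-g s) 0 ≤ mf g t :=
  le_csSup (bdd hg t) (mem_image_of_mem _ hs)

lemma mf_nonneg {g : ℝ → ℝ} (hg : Continuous g) {t : ℝ} (ht : 0 ≤ t) :
    0 ≤ mf g t :=
  le_trans (le_max_right _ _) (le_mf hg ⟨le_refl 0, ht⟩)

lemma mf_le {g : ℝ → ℝ} {t c : ℝ} (ht : 0 ≤ t)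
    (h : ∀ s ∈ Icc 0 t, max (-g s) 0 ≤ c) : mf g t ≤ c :=
  csSup_le (by exact ⟨_, mem_image_of_mem _ ⟨le_refl 0, ht⟩⟩)
    (by rintro y ⟨s, hs, rfl⟩; exact h s hs)

lemma mf_mono {g : ℝ → ℝ} (hg : Continuous g) {t t' : ℝ} (ht : 0 ≤ t) (h : t ≤ t') :
    mf g t ≤ mf g t' :=
  csSup_le_csSup (bdd hg t') (⟨_, mem_image_of_mem _ ⟨le_refl 0, ht⟩⟩)
    (image_mono (Icc_subset_Icc_right h))

lemma mf_congr {g g' : ℝ → ℝ} {t : ℝ} (h : ∀ s ∈ Icc 0 t, g s = g' s) :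
    mf g t = mf g' t := by
  unfold mf
  congr 1
  exact image_congr (fun s hs => by rw [h s hs])

lemma mf_lip_half {g g' : ℝ → ℝ} (hg' : Continuous g') {t c : ℝ} (ht : 0 ≤ t)
    (hc : ∀ s ∈ Icc 0 t, |g s - g' s| ≤ c) : mf g t ≤ mf g' t + c := by
  refine mf_le ht (fun s hs => ?_)
  have h1 : |max (-g s) 0 - max (-g' s) 0| ≤ |(-g s) - (-g' s)| :=
    abs_max_sub_max_le_abs _ _ _
  have h2 : |(-g s) - (-g' s)| = |g s - g' s| := by rw [abs_sub_comm]; ring_nf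
  have := hc s hs
  have h3 := le_mf hg' hs
  have h4 := abs_le.1 h1
  nlinarith [abs_nonneg (g s - g' s)]

lemma mf_lip {g g' : ℝ → ℝ} (hg : Continuous g) (hg' : Continuous g') {t c : ℝ}
    (ht : 0 ≤ t) (hc : ∀ s ∈ Icc 0 t, |g s - g' s| ≤ c) :
    |mf g t - mf g' t| ≤ c := by
  have h1 := mf_lip_half hg' ht hc
  have h2 := mf_lip_half hg ht (fun s hs => by rw [abs_sub_comm]; exact hc s hs)
  rw [abs_le]; constructor <;> linarith

lemma mf_exists_max {g : ℝ → ℝ} (hg : Continuous g) {t : ℝ} (ht : 0 ≤ t) :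
    ∃ u ∈ Icc 0 t, mf g t = max (-g u) 0 := by
  obtain ⟨u, hu, hmax⟩ := isCompact_Icc.exists_isMaxOn ⟨0, le_refl 0, ht⟩
    (hcont hg).continuousOn
  exact ⟨u, hu, le_antisymm (mf_le ht (fun s hs => hmax hs)) (le_mf hg hu)⟩

lemma mf_continuousOn {g : ℝ → ℝ} (hg : Continuous g) {T : ℝ} :
    ContinuousOn (mf g) (Icc 0 T) := by
  intro t ht
  rw [Metric.continuousWithinAt_iff]
  intro ε hε
  have huc := isCompact_Icc.uniformContinuousOn_of_continuous (s := Icc (0:ℝ) T)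
    (hcont hg).continuousOn
  rw [Metric.uniformContinuousOn_iff] at huc
  obtain ⟨δ, hδ, hdu⟩ := huc (ε / 2) (by linarith)
  refine ⟨δ, hδ, fun t' ht' hd => ?_⟩
  have key : ∀ a b : ℝ, a ∈ Icc 0 T → b ∈ Icc 0 T → a ≤ b → dist b a < δ →
      mf g b - mf g a ≤ ε / 2 := by
    intro a b ha hb hab hdab
    have h1 : mf g b ≤ mf g a + ε / 2 := by
      refine mf_le (ha.1.trans hab) (fun s hs => ?_)
      rcases le_total s a with hsa | hsa
      · have := le_mf hg (⟨hs.1, hsa⟩ : s ∈ Icc 0 a)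
        linarith [this]
      · have hsT : s ∈ Icc 0 T := ⟨hs.1, hs.2.trans hb.2⟩
        have hds : dist s a < δ := by
          rw [Real.dist_eq] at hdab ⊢
          rw [abs_of_nonneg (by linarith : (0:ℝ) ≤ s - a)]
          rw [abs_of_nonneg (by linarith : (0:ℝ) ≤ b - a)] at hdab
          linarith [hs.2]
        have hthis := hdu s hsT a ha hds
        rw [Real.dist_eq] at hthis
        have h4 := (abs_lt.1 hthis).2
        have h3 := le_mf hg (⟨ha.1, le_refl a⟩ : a ∈ Icc 0 a)
        linarith
    linarith
  rcases le_total t t' with h | h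
  · have h0 : mf g t ≤ mf g t' := mf_mono hg ht.1 h
    have := key t t' ht ht' h hd
    rw [Real.dist_eq, abs_of_nonneg (by linarith)]
    linarith
  · have h0 : mf g t' ≤ mf g t := mf_mono hg ht'.1 h
    have := key t' t ht' ht h (by rwa [dist_comm] at hd)
    rw [Real.dist_eq, abs_of_nonpos (by linarith)]
    linarith

lemma mf_flat {g : ℝ → ℝ} (hg : Continuous g) {c d : ℝ} (h0c : 0 ≤ c) (hcd : c ≤ d)
    (hpos : ∀ u ∈ Icc c d, 0 < g u + mf g u) : mf g d = mf g c := by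
  refine le_antisymm ?_ (mf_mono hg h0c hcd)
  by_contra hlt
  push_neg at hlt
  obtain ⟨u, hu, hmax⟩ := mf_exists_max hg (h0c.trans hcd)
  have hcu : c < u := by
    by_contra hcu
    push_neg at hcu
    have := le_mf hg (⟨hu.1, hcu⟩ : u ∈ Icc 0 c)
    rw [← hmax] at this
    linarith
  have hucd : u ∈ Icc c d := ⟨hcu.le, hu.2⟩
  have hpu := hpos u hucd
  have h0 : 0 ≤ mf g c := mf_nonneg hg h0c
  have hgu : max (-g u) 0 = -g u := by
    rcases max_cases (-g u) (0:ℝ) with ⟨h1, h2⟩ | ⟨h1, h2⟩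
    · exact h1
    · rw [h1] at hmax; linarith
  have hmu : mf g u ≤ mf g d := mf_mono hg (h0c.trans hcu.le) hu.2
  have hmu' := le_mf hg (⟨hu.1, le_refl u⟩ : u ∈ Icc 0 u)
  rw [hgu] at hmu'
  rw [hmax, hgu] at hmu
  linarith

noncomputable def pr (T t : ℝ) : ℝ := min (max t 0) T

lemma pr_mem {T : ℝ} (hT : 0 ≤ T) (t : ℝ) : pr T t ∈ Icc 0 T :=
  ⟨le_min (le_max_right _ _) hT, min_le_right _ _⟩

lemma pr_eq {T t : ℝ} (ht : t ∈ Icc 0 T) : pr T t = t := by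
  unfold pr
  rw [max_eq_left ht.1, min_eq_left ht.2]

lemma pr_cont (T : ℝ) : Continuous (pr T) := by unfold pr; fun_prop

lemma pr_mono (T : ℝ) : Monotone (pr T) :=
  fun a b h => min_le_min (max_le_max h (le_refl 0)) (le_refl T)

lemma pr_lip (T a b : ℝ) : |pr T a - pr T b| ≤ |a - b| := by
  have h1 : |max a 0 - max b 0| ≤ |a - b| := abs_max_sub_max_le_abs _ _ _
  have h2 := abs_min_sub_min_le_max (max a 0) T (max b 0) T
  simp only [sub_self, abs_zero] at h2
  calc |pr T a - pr T b| ≤ max |max a 0 - max b 0| 0 := h2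
    _ ≤ |a - b| := by rw [max_eq_left (abs_nonneg _)]; exact h1

noncomputable def extX {T : ℝ} (hT : 0 ≤ T) (J : C(Icc (0:ℝ) T, ℝ)) : ℝ → ℝ :=
  fun t => J ⟨pr T t, pr_mem hT t⟩

lemma extX_cont {T : ℝ} (hT : 0 ≤ T) (J : C(Icc (0:ℝ) T, ℝ)) :
    Continuous (extX hT J) :=
  J.continuous.comp ((pr_cont T).subtype_mk _)

lemma extX_eq {T : ℝ} (hT : 0 ≤ T) (J : C(Icc (0:ℝ) T, ℝ)) {t : ℝ} (ht : t ∈ Icc 0 T) :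
    extX hT J t = J ⟨t, ht⟩ := by
  unfold extX
  congr 1
  exact Subtype.ext (pr_eq ht)

noncomputable def Vfun {T : ℝ} (hT : 0 ≤ T) (n : ℕ) (g : Fin n → ℝ → ℝ) (v K : ℝ)
    (J : C(Icc (0:ℝ) T, ℝ)) : ℝ → ℝ :=
  fun s => -v + (K / n) * ∑ i, mf (fun u => g i u + extX hT J u) (pr T s)

lemma Vfun_cont {T : ℝ} (hT : 0 ≤ T) (n : ℕ) (g : Fin n → ℝ → ℝ)
    (hg : ∀ i, Continuous (g i)) (v K : ℝ) (J : C(Icc (0:ℝ) T, ℝ)) :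
    Continuous (Vfun hT n g v K J) := by
  unfold Vfun
  refine continuous_const.add (continuous_const.mul ?_)
  refine continuous_finset_sum _ (fun i _ => ?_)
  exact (mf_continuousOn ((hg i).add (extX_cont hT J))).comp_continuous
    (pr_cont T) (pr_mem hT)

noncomputable def Phi {T : ℝ} (hT : 0 ≤ T) (n : ℕ) (g : Fin n → ℝ → ℝ)
    (hg : ∀ i, Continuous (g i)) (v K : ℝ)
    (J : C(Icc (0:ℝ) T, ℝ)) : C(Icc (0:ℝ) T, ℝ) :=
  ⟨fun x => ∫ s in (0:ℝ)..(x:ℝ), Vfun hT n g v K J s,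
    (intervalIntegral.continuous_primitive
      (fun a b => (Vfun_cont hT n g hg v K J).intervalIntegrable a b) 0).comp
      continuous_subtype_val⟩

lemma Phi_apply {T : ℝ} (hT : 0 ≤ T) (n : ℕ) (g : Fin n → ℝ → ℝ)
    (hg : ∀ i, Continuous (g i)) (v K : ℝ) (J : C(Icc (0:ℝ) T, ℝ)) (x : Icc (0:ℝ) T) :
    Phi hT n g hg v K J x = ∫ s in (0:ℝ)..(x:ℝ), Vfun hT n g v K J s := rfl

lemma Vfun_lip {T : ℝ} (hT : 0 ≤ T) {n : ℕ} (hn : 1 ≤ n) (g : Fin n → ℝ → ℝ)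
    (hg : ∀ i, Continuous (g i)) (v : ℝ) {K : ℝ} (hK : 0 ≤ K)
    (A B : C(Icc (0:ℝ) T, ℝ)) {s c : ℝ} (hs : s ∈ Icc 0 T) (hc : 0 ≤ c)
    (hAB : ∀ u : Icc (0:ℝ) T, (u : ℝ) ≤ s → |A u - B u| ≤ c) :
    |Vfun hT n g v K A s - Vfun hT n g v K B s| ≤ K * c := by
  have hprs : pr T s = s := pr_eq hs
  have hterm : ∀ i : Fin n,
      |mf (fun u => g i u + extX hT A u) (pr T s)
        - mf (fun u => g i u + extX hT B u) (pr T s)| ≤ c := by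
    intro i
    refine mf_lip ((hg i).add (extX_cont hT A)) ((hg i).add (extX_cont hT B))
      (by rw [hprs]; exact hs.1) (fun u hu => ?_)
    rw [hprs] at hu
    have huT : u ∈ Icc 0 T := ⟨hu.1, hu.2.trans hs.2⟩
    have h1 : g i u + extX hT A u - (g i u + extX hT B u)
        = A ⟨u, huT⟩ - B ⟨u, huT⟩ := by
      rw [extX_eq hT A huT, extX_eq hT B huT]; ring
    rw [Pi.add_apply, Pi.add_apply, h1]
    exact hAB ⟨u, huT⟩ hu.2
  have hsum : |∑ i, mf (fun u => g i u + extX hT A u) (pr T s)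
      - ∑ i, mf (fun u => g i u + extX hT B u) (pr T s)| ≤ n * c := by
    rw [← Finset.sum_sub_distrib]
    calc |∑ i, (mf (fun u => g i u + extX hT A u) (pr T s)
          - mf (fun u => g i u + extX hT B u) (pr T s))|
        ≤ ∑ i, |mf (fun u => g i u + extX hT A u) (pr T s)
          - mf (fun u => g i u + extX hT B u) (pr T s)| :=
          Finset.abs_sum_le_sum_abs _ _
      _ ≤ ∑ _i : Fin n, c := Finset.sum_le_sum (fun i _ => hterm i)
      _ = n * c := by
          rw [Finset.sum_const, Finset.card_univ, Fintype.card_fin, nsmul_eq_mul]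
  have hn0 : (0:ℝ) < n := by positivity
  have heq : Vfun hT n g v K A s - Vfun hT n g v K B s
      = (K / n) * (∑ i, mf (fun u => g i u + extX hT A u) (pr T s)
        - ∑ i, mf (fun u => g i u + extX hT B u) (pr T s)) := by
    unfold Vfun; ring
  rw [heq, abs_mul, abs_of_nonneg (by positivity : (0:ℝ) ≤ K / n)]
  calc (K / n) * |_| ≤ (K / n) * (n * c) := by
        exact mul_le_mul_of_nonneg_left hsum (by positivity)
    _ = K * c := by field_simp

lemma iter_bound {T : ℝ} (hT : 0 ≤ T) {n : ℕ} (hn : 1 ≤ n) (g : Fin n → ℝ → ℝ)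
    (hg : ∀ i, Continuous (g i)) (v : ℝ) {K : ℝ} (hK : 0 ≤ K)
    (A B : C(Icc (0:ℝ) T, ℝ)) :
    ∀ (k : ℕ) (x : Icc (0:ℝ) T),
      |(Phi hT n g hg v K)^[k] A x - (Phi hT n g hg v K)^[k] B x|
        ≤ dist A B * (K * x)^k / (k !) := by
  intro k
  induction k with
  | zero =>
    intro x
    simp only [Function.iterate_zero, id, pow_zero, Nat.factorial_zero, Nat.cast_one,
      mul_one, div_one]
    have := ContinuousMap.dist_apply_le_dist (f := A) (g := B) x
    rwa [Real.dist_eq] at this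
  | succ k ih =>
    intro x
    rw [Function.iterate_succ_apply', Function.iterate_succ_apply']
    set A' := (Phi hT n g hg v K)^[k] A with hA'
    set B' := (Phi hT n g hg v K)^[k] B with hB'
    set D := dist A B with hDdef
    have hD0 : (0:ℝ) ≤ D := dist_nonneg
    have hx0 : (0:ℝ) ≤ (x : ℝ) := x.2.1
    have hcA := Vfun_cont hT n g hg v K A'
    have hcB := Vfun_cont hT n g hg v K B'
    have hfac : (0:ℝ) < ((k !) : ℝ) := by exact_mod_cast (Nat.factorial_pos k)
    have hbound : ∀ s ∈ Icc (0:ℝ) (x:ℝ),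
        |Vfun hT n g v K A' s - Vfun hT n g v K B' s|
          ≤ K * (D * (K * s)^k / (k !)) := by
      intro s hsx
      have hs : s ∈ Icc 0 T := ⟨hsx.1, hsx.2.trans x.2.2⟩
      refine Vfun_lip hT hn g hg v hK A' B' hs
        (div_nonneg (mul_nonneg hD0 (pow_nonneg (mul_nonneg hK hsx.1) k)) hfac.le)
        (fun u hu => ?_)
      calc |A' u - B' u| ≤ D * (K * (u:ℝ))^k / (k !) := ih u
        _ ≤ D * (K * s)^k / (k !) := by
            have h1 : (K * (u:ℝ))^k ≤ (K * s)^k :=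
              pow_le_pow_left₀ (mul_nonneg hK u.2.1)
                (mul_le_mul_of_nonneg_left hu hK) k
            have := u.2.1
            gcongr
    have hint1 : IntervalIntegrable (Vfun hT n g v K A') volume 0 (x:ℝ) :=
      hcA.intervalIntegrable _ _
    have hint2 : IntervalIntegrable (Vfun hT n g v K B') volume 0 (x:ℝ) :=
      hcB.intervalIntegrable _ _
    have heq : Phi hT n g hg v K A' x - Phi hT n g hg v K B' x
        = ∫ s in (0:ℝ)..(x:ℝ), (Vfun hT n g v K A' s - Vfun hT n g v K B' s) := by
      rw [Phi_apply, Phi_apply, intervalIntegral.integral_sub hint1 hint2]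
    have hGeq : (fun s : ℝ => K * (D * (K * s)^k / (k !)))
        = fun s : ℝ => (K^(k+1) * D / (k !)) * s^k := by
      funext s
      rw [mul_pow]
      ring
    calc |Phi hT n g hg v K A' x - Phi hT n g hg v K B' x|
        = |∫ s in (0:ℝ)..(x:ℝ), (Vfun hT n g v K A' s - Vfun hT n g v K B' s)| := by
          rw [heq]
      _ ≤ ∫ s in (0:ℝ)..(x:ℝ), |Vfun hT n g v K A' s - Vfun hT n g v K B' s| :=
          intervalIntegral.abs_integral_le_integral_abs hx0
      _ ≤ ∫ s in (0:ℝ)..(x:ℝ), K * (D * (K * s)^k / (k !)) := by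
          refine intervalIntegral.integral_mono_on hx0 ?_ ?_ hbound
          · exact (hcA.sub hcB).abs.intervalIntegrable _ _
          · exact (by fun_prop : Continuous
              (fun s : ℝ => K * (D * (K * s)^k / (k !)))).intervalIntegrable _ _
      _ = D * (K * (x:ℝ))^(k+1) / ((k+1)!) := by
          rw [hGeq, intervalIntegral.integral_const_mul, integral_pow]
          have hkf : (((k+1)!) : ℝ) = (k+1) * ((k !) : ℝ) := by
            push_cast [Nat.factorial_succ]
            ring
          rw [hkf, zero_pow (Nat.succ_ne_zero k), mul_pow]
          field_simp
          ring

lemma exists_J {T : ℝ} (hT : 0 < T) {n : ℕ} (hn : 1 ≤ n) (g : Fin n → ℝ → ℝ)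
    (hg : ∀ i, Continuous (g i)) (v K : ℝ) (hK : 0 ≤ K) :
    ∃ J : C(Icc (0:ℝ) T, ℝ), Phi hT.le n g hg v K J = J := by
  haveI : Nonempty C(Icc (0:ℝ) T, ℝ) := ⟨0⟩
  have htd := FloorSemiring.tendsto_pow_div_factorial_atTop (K := ℝ) (K*T)
  have hev : ∀ᶠ N : ℕ in Filter.atTop, (K*T)^N / (N !) < 1 :=
    htd.eventually (Filter.eventually_of_mem (Iio_mem_nhds (by norm_num : (0:ℝ) < 1))
      (fun y hy => hy))
  obtain ⟨N, hN⟩ := hev.exists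
  set c0 := (K*T)^N / (N !) with hc0
  have hc00 : 0 ≤ c0 := by
    have : (0:ℝ) < (N !) := by exact_mod_cast Nat.factorial_pos N
    positivity
  have hlip : ∀ A B : C(Icc (0:ℝ) T, ℝ),
      dist ((Phi hT.le n g hg v K)^[N] A) ((Phi hT.le n g hg v K)^[N] B)
        ≤ c0 * dist A B := by
    intro A B
    rw [ContinuousMap.dist_le (mul_nonneg hc00 dist_nonneg)]
    intro x
    rw [Real.dist_eq]
    calc |(Phi hT.le n g hg v K)^[N] A x - (Phi hT.le n g hg v K)^[N] B x|
        ≤ dist A B * (K * x)^N / (N !) := iter_bound hT.le hn g hg v hK A B N x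
      _ ≤ dist A B * (K * T)^N / (N !) := by
          have hfac : (0:ℝ) < ((N !) : ℝ) := by exact_mod_cast Nat.factorial_pos N
          have h1 : (K * (x:ℝ))^N ≤ (K * T)^N :=
            pow_le_pow_left₀ (mul_nonneg hK x.2.1)
              (mul_le_mul_of_nonneg_left x.2.2 hK) N
          gcongr
      _ = c0 * dist A B := by rw [hc0]; ring
  have hcontr : ContractingWith c0.toNNReal ((Phi hT.le n g hg v K)^[N]) := by
    constructor
    · rw [← NNReal.coe_lt_coe, Real.coe_toNNReal _ hc00, NNReal.coe_one]
      exact hN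
    · refine LipschitzWith.of_dist_le_mul (fun A B => ?_)
      rw [Real.coe_toNNReal _ hc00]
      exact hlip A B
  exact ⟨hcontr.fixedPoint _, hcontr.isFixedPt_fixedPoint_iterate⟩

lemma main_sol {T : ℝ} (hT : 0 < T) {n : ℕ} (hn : 1 ≤ n) (g : Fin n → ℝ → ℝ)
    (hg : ∀ i, Continuous (g i)) (v K : ℝ) (hK : 0 ≤ K) :
    ∃ I : ℝ → ℝ, Continuous I ∧
      (∀ t ∈ Icc 0 T, I t =
        ∫ s in (0:ℝ)..t,
          (-v + (K / n) * ∑ i, mf (fun u => g i u + I u) (pr T s))) := by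
  obtain ⟨J, hJ⟩ := exists_J hT hn g hg v K hK
  refine ⟨extX hT.le J, extX_cont _ _, fun t ht => ?_⟩
  have h1 : extX hT.le J t = J ⟨t, ht⟩ := extX_eq _ _ ht
  have h2 : J ⟨t, ht⟩ = Phi hT.le n g hg v K J ⟨t, ht⟩ := by rw [hJ]
  rw [h1, h2, Phi_apply]
  rfl

end SkoAux

theorem stmt_6 (T : ℝ) (hT : 0 < T) (n : ℕ) (hn : 1 ≤ n)
    (f : Fin n → ℝ → ℝ) (hf : ∀ i, ContinuousOn (f i) (Set.Icc 0 T))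
    (v K : ℝ) (hK : 0 ≤ K) :
    ∃ I V : ℝ → ℝ, IsSkorohodSystemSol T n f v K I V ∧
      ∀ i : Fin n,
        (∀ t ∈ Set.Icc 0 T, 0 ≤ f i t + I t + mf (fun s => f i s + I s) t) ∧
        ∃ S : StieltjesFunction ℝ,
          (∀ t : ℝ, S t = mf (fun s => f i s + I s) (min (max t 0) T)) ∧
          S.measure
            {s | s ∈ Set.Icc 0 T ∧
              0 < f i s + I s + mf (fun u => f i u + I u) s} = 0 := by
  have hT0 : (0:ℝ) ≤ T := hT.le
  set g : Fin n → ℝ → ℝ := fun i u => f i (SkoAux.pr T u) with hgdef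
  have hg : ∀ i, Continuous (g i) := fun i =>
    (hf i).comp_continuous (SkoAux.pr_cont T) (SkoAux.pr_mem hT0)
  have hgf : ∀ i : Fin n, ∀ u ∈ Icc (0:ℝ) T, g i u = f i u := by
    intro i u hu
    show f i (SkoAux.pr T u) = f i u
    rw [SkoAux.pr_eq hu]
  obtain ⟨I, hIc, hIeq⟩ := SkoAux.main_sol hT hn g hg v K hK
  set V : ℝ → ℝ := fun s =>
    -v + (K / n) * ∑ i, mf (fun u => g i u + I u) (SkoAux.pr T s) with hVdef
  have hVc : Continuous V := by
    rw [hVdef]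
    refine continuous_const.add (continuous_const.mul ?_)
    refine continuous_finset_sum _ (fun i _ => ?_)
    exact (SkoAux.mf_continuousOn ((hg i).add hIc)).comp_continuous
      (SkoAux.pr_cont T) (SkoAux.pr_mem hT0)
  have hmf_eq : ∀ i : Fin n, ∀ t ∈ Icc (0:ℝ) T,
      mf (fun s => f i s + I s) t = mf (fun u => g i u + I u) t := by
    intro i t ht
    refine SkoAux.mf_congr (fun s hs => ?_)
    rw [hgf i s ⟨hs.1, hs.2.trans ht.2⟩]
  refine ⟨I, V, ⟨hIc.continuousOn, hVc.continuousOn, ?_, ?_⟩, ?_⟩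
  · intro t ht
    rw [hVdef]
    simp only
    rw [SkoAux.pr_eq ht]
    congr 2
    exact Finset.sum_congr rfl (fun i _ => (hmf_eq i t ht).symm)
  · intro t ht
    rw [hVdef]
    exact hIeq t ht
  · intro i
    have hGc : Continuous (fun u => g i u + I u) := (hg i).add hIc
    constructor
    · intro t ht
      have h1 := hmf_eq i t ht
      have h2 := SkoAux.le_mf hGc (⟨ht.1, le_refl t⟩ : t ∈ Icc 0 t)
      have h3 := le_max_left (-(g i t + I t)) (0:ℝ)
      have h4 := hgf i t ht
      rw [h1, ← h4]
      linarith
    · -- Stieltjes part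
      refine ⟨⟨fun t => mf (fun u => g i u + I u) (SkoAux.pr T t), ?_, ?_⟩, ?_, ?_⟩
      · -- monotone
        intro a b hab
        exact SkoAux.mf_mono hGc (SkoAux.pr_mem hT0 a).1 (SkoAux.pr_mono T hab)
      · -- right continuous
        intro x
        exact (((SkoAux.mf_continuousOn hGc).comp_continuous
          (SkoAux.pr_cont T) (SkoAux.pr_mem hT0)).continuousAt).continuousWithinAt
      · -- identification
        intro t
        show mf (fun u => g i u + I u) (SkoAux.pr T t)
          = mf (fun s => f i s + I s) (min (max t 0) T)
        have : min (max t 0) T = SkoAux.pr T t := rfl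
        rw [this, (hmf_eq i (SkoAux.pr T t) (SkoAux.pr_mem hT0 t))]
      · -- vanishing measure
        refine MeasureTheory.measure_null_of_locally_null _ (fun s₀ hs₀ => ?_)
        obtain ⟨hs₀T, hs₀pos⟩ := hs₀
        have hprs₀ : SkoAux.pr T s₀ = s₀ := SkoAux.pr_eq hs₀T
        have hxpos : 0 < g i s₀ + I s₀ + mf (fun u => g i u + I u) s₀ := by
          have e1 := hmf_eq i s₀ hs₀T
          have e2 := hgf i s₀ hs₀T
          rw [e1, ← e2] at hs₀pos
          exact hs₀pos
        have hxc : ContinuousOn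
            (fun u => (g i u + I u) + mf (fun w => g i w + I w) u) (Icc 0 T) :=
          hGc.continuousOn.add (SkoAux.mf_continuousOn hGc)
        have hev : (fun u => (g i u + I u) + mf (fun w => g i w + I w) u) ⁻¹' Ioi 0
            ∈ nhdsWithin s₀ (Icc 0 T) :=
          (hxc s₀ hs₀T) (Ioi_mem_nhds hxpos)
        obtain ⟨ε, hε, hball⟩ := Metric.mem_nhdsWithin_iff.1 hev
        set a' := s₀ - ε/2 with ha'
        set b' := s₀ + ε/2 with hb'
        have claim : mf (fun u => g i u + I u) (SkoAux.pr T b')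
            = mf (fun u => g i u + I u) (SkoAux.pr T a') := by
          have hpq : SkoAux.pr T a' ≤ SkoAux.pr T b' :=
            SkoAux.pr_mono T (by rw [ha', hb']; linarith)
          refine SkoAux.mf_flat hGc (SkoAux.pr_mem hT0 a').1 hpq (fun w hw => ?_)
          have hw1 : w ∈ Icc (0:ℝ) T :=
            ⟨(SkoAux.pr_mem hT0 a').1.trans hw.1, hw.2.trans (SkoAux.pr_mem hT0 b').2⟩
          have hpa : |SkoAux.pr T a' - s₀| ≤ ε/2 := by
            have := SkoAux.pr_lip T a' s₀
            rw [hprs₀] at this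
            refine this.trans ?_
            rw [ha']
            rw [abs_of_nonpos (by linarith)]
            linarith
          have hpb : |SkoAux.pr T b' - s₀| ≤ ε/2 := by
            have := SkoAux.pr_lip T b' s₀
            rw [hprs₀] at this
            refine this.trans ?_
            rw [hb']
            rw [abs_of_nonneg (by linarith)]
            linarith
          have hwd : dist w s₀ < ε := by
            rw [Real.dist_eq, abs_lt]
            have h5 := abs_le.1 hpa
            have h6 := abs_le.1 hpb
            constructor
            · have := hw.1; linarith [h5.1]
            · have := hw.2; linarith [h6.2]
          exact hball ⟨Metric.mem_ball.2 hwd, hw1⟩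
        refine ⟨Ioc a' b', ?_, ?_⟩
        · exact mem_nhdsWithin_of_mem_nhds
            (Ioc_mem_nhds (by rw [ha']; linarith) (by rw [hb']; linarith))
        · rw [StieltjesFunction.measure_Ioc]
          show ENNReal.ofReal
            (mf (fun u => g i u + I u) (SkoAux.pr T b')
              - mf (fun u => g i u + I u) (SkoAux.pr T a')) = 0
          rw [claim, sub_self, ENNReal.ofReal_zero]
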